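/- Let A be a process executing the Read Checking protocol. Whatever the execution, the system reaches a configuration in which A's program counter is no longer within the repeat loop; in particular no process stays in the repeat loop forever and the protocol is deadlock-free. -/

import Mathlib

/-!
An operational model of the Read Checking protocol of Johnen, Lavallée, Lavault.

A network is a finite-degree system of processes; each process `p` has `deg p ≥ 1`
neighbours, enumerated by `nbr p : Fin (deg p) → Proc`.  Communication is via link
registers under read/write atomicity: `Write_{AB}` and `Read_{AB}` are owned
(written) by `A` and can be read by its neighbour `B`.
-/

structure Network where
  Proc : Type
  deg : Proc → ℕ
  deg_pos : ∀ p, 0 < deg p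
  nbr : (p : Proc) → Fin (deg p) → Proc
  nbr_ne : ∀ p i, nbr p i ≠ p
  nbr_inj : ∀ p, Function.Injective (nbr p)
  nbr_symm : ∀ p i, ∃ j, nbr (nbr p i) j = p

namespace RC

open Classical

/-- Program counter of a process with `n` neighbours running the Read Checking
protocol.  `write i` : about to execute `write(Write_{AB_i}, get_i)`;
`loop i k` : inside the repeat loop, about to execute the `k`-th atomic action
(`k = 0`: `r_i ← read(Write_{B_iA})`, `k = 1`: `write(Read_{AB_i}, r_i)`,
`k = 2`: `val_i ← read(Read_{B_iA})`, `k = 3`: `s_i ← read(Write_{AB_i})`,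
followed, after the last neighbour, by the (local) exit test `∀ i, val_i = s_i`). -/
inductive PC (n : ℕ) : Type
  | write : Fin n → PC n
  | loop : Fin n → Fin 4 → PC n

/-- The link registers: `W A B` is `Write_{AB}`, `R A B` is `Read_{AB}` (both owned by `A`). -/
inductive Reg (Proc : Type) : Type
  | W : Proc → Proc → Reg Proc
  | R : Proc → Proc → Reg Proc

/-- An atomic action: a single read of one register, or a single write of a value
into one register (read/write atomicity). -/
inductive Act (Proc Val : Type) : Type
  | read : Reg Proc → Act Proc Val
  | write : Reg Proc → Val → Act Proc Val

/-- A configuration: contents of all link registers, and local state of every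
process (program counter and the local variables `r_i`, `val_i`, `s_i`). -/
structure Config (Net : Network) (Val : Type) : Type where
  regW : Net.Proc → Net.Proc → Val
  regR : Net.Proc → Net.Proc → Val
  pc : (p : Net.Proc) → PC (Net.deg p)
  rv : (p : Net.Proc) → Fin (Net.deg p) → Val
  vv : (p : Net.Proc) → Fin (Net.deg p) → Val
  sv : (p : Net.Proc) → Fin (Net.deg p) → Val

def finSucc? {n : ℕ} (i : Fin n) : Option (Fin n) :=
  if h : i.1 + 1 < n then some ⟨i.1 + 1, h⟩ else none

noncomputable def upd2 {Proc : Type} {β : Type} (f : Proc → Proc → β) (a b : Proc) (v : β) :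
    Proc → Proc → β :=
  fun x y => if x = a ∧ y = b then v else f x y

/-- One atomic step of process `p`, labelled by the action performed.
The value written by `write(Write_{AB_i}, get_i)` is arbitrary: `get_i` is an
arbitrary helper function returning the next message to be sent. -/
inductive Step (Net : Network) (Val : Type) :
    Config Net Val → Net.Proc → Act Net.Proc Val → Config Net Val → Prop
  | writeW (c : Config Net Val) (p : Net.Proc) (i : Fin (Net.deg p)) (v : Val)
      (h : c.pc p = .write i) :
      Step Net Val c p (.write (.W p (Net.nbr p i)) v)
        { c with
          regW := upd2 c.regW p (Net.nbr p i) v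
          pc := Function.update c.pc p
            (match finSucc? i with
             | some j => PC.write j
             | none => PC.loop ⟨0, Net.deg_pos p⟩ 0) }
  | readNbrW (c : Config Net Val) (p : Net.Proc) (i : Fin (Net.deg p))
      (h : c.pc p = .loop i 0) :
      Step Net Val c p (.read (.W (Net.nbr p i) p))
        { c with
          rv := Function.update c.rv p (Function.update (c.rv p) i (c.regW (Net.nbr p i) p))
          pc := Function.update c.pc p (PC.loop i 1) }
  | writeR (c : Config Net Val) (p : Net.Proc) (i : Fin (Net.deg p))
      (h : c.pc p = .loop i 1) :
      Step Net Val c p (.write (.R p (Net.nbr p i)) (c.rv p i))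
        { c with
          regR := upd2 c.regR p (Net.nbr p i) (c.rv p i)
          pc := Function.update c.pc p (PC.loop i 2) }
  | readNbrR (c : Config Net Val) (p : Net.Proc) (i : Fin (Net.deg p))
      (h : c.pc p = .loop i 2) :
      Step Net Val c p (.read (.R (Net.nbr p i) p))
        { c with
          vv := Function.update c.vv p (Function.update (c.vv p) i (c.regR (Net.nbr p i) p))
          pc := Function.update c.pc p (PC.loop i 3) }
  | readOwnW (c : Config Net Val) (p : Net.Proc) (i : Fin (Net.deg p))
      (h : c.pc p = .loop i 3) :
      Step Net Val c p (.read (.W p (Net.nbr p i)))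
        { c with
          sv := Function.update c.sv p (Function.update (c.sv p) i (c.regW p (Net.nbr p i)))
          pc := Function.update c.pc p
            (match finSucc? i with
             | some j => PC.loop j 0
             | none =>
               if ∀ j, c.vv p j = Function.update (c.sv p) i (c.regW p (Net.nbr p i)) j
               then PC.write ⟨0, Net.deg_pos p⟩
               else PC.loop ⟨0, Net.deg_pos p⟩ 0) }

/-- An execution: an infinite sequence of configurations, starting from an
arbitrary configuration, where at each instant `t` the scheduled process
`sched t` performs the atomic action `act t`. -/
structure Exec (Net : Network) (Val : Type) : Type where
  cfg : ℕ → Config Net Val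
  sched : ℕ → Net.Proc
  act : ℕ → Act Net.Proc Val
  step : ∀ t, Step Net Val (cfg t) (sched t) (act t) (cfg (t + 1))

/-- A process is enabled when it can perform an atomic step. -/
def Enabled {Net : Network} {Val : Type} (c : Config Net Val) (p : Net.Proc) : Prop :=
  ∃ a c', Step Net Val c p a c'

/-- Fair scheduler: any process that can continuously perform an action
eventually performs one. -/
def Exec.Fair {Net : Network} {Val : Type} (e : Exec Net Val) : Prop :=
  ∀ p t, (∀ u, t ≤ u → Enabled (e.cfg u) p) → ∃ u, t ≤ u ∧ e.sched u = p

/-- The program counter of `p` is inside the repeat loop. -/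
def InLoop {Net : Network} {Val : Type} (c : Config Net Val) (p : Net.Proc) : Prop :=
  ∃ i k, c.pc p = PC.loop i k

/-- `B` allows `A` to write iff `Read_{BA} = Write_{AB}`. -/
def Allows {Net : Network} {Val : Type} (c : Config Net Val) (B A : Net.Proc) : Prop :=
  c.regR B A = c.regW A B

/-- `B` is a neighbour of `A`. -/
def Neighbour (Net : Network) (A B : Net.Proc) : Prop := ∃ i, Net.nbr A i = B

/-- At instant `t`, process `A` writes (some value) into its register `Write_{AB}`. -/
def WritesW {Net : Network} {Val : Type} (e : Exec Net Val) (A B : Net.Proc) (t : ℕ) : Prop :=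
  e.sched t = A ∧ ∃ v, e.act t = Act.write (Reg.W A B) v

/-- At instant `t`, process `B` reads from the register `Write_{AB}` of its neighbour `A`. -/
def ReadsW {Net : Network} {Val : Type} (e : Exec Net Val) (A B : Net.Proc) (t : ℕ) : Prop :=
  e.sched t = B ∧ e.act t = Act.read (Reg.W A B)

end RC

namespace RC
open Classical

variable {Net : Network} {Val : Type}

/-- Linear index of a program counter state along the cycle. -/
def idx {n : ℕ} : PC n → ℕ
  | .write i => i.1
  | .loop i k => n + 4 * i.1 + k.1

lemma idx_lt {n : ℕ} (p : PC n) : idx p < 5 * n := by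
  cases p with
  | write i => have := i.isLt; simp [idx]; omega
  | loop i k => have := i.isLt; have := k.isLt; simp [idx]; omega

lemma eq_of_idx_eq {n : ℕ} {p q : PC n} (h : idx p = idx q) : p = q := by
  cases p with
  | write i =>
    cases q with
    | write i' => have := i.isLt; have := i'.isLt; simp [idx] at h; exact congrArg _ (Fin.ext h)
    | loop i' k' => have := i.isLt; simp [idx] at h; omega
  | loop i k =>
    cases q with
    | write i' => have := i'.isLt; simp [idx] at h; omega
    | loop i' k' =>
      have hk := k.isLt; have hk' := k'.isLt
      simp [idx] at h
      have hi : i.1 = i'.1 := by omega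
      have hkk : k.1 = k'.1 := by omega
      rw [Fin.ext hi, Fin.ext hkk]

lemma rank_lt {n T a b : ℕ} (hn : n ≤ T) (hT : T < 5*n) (hb : b < 5*n) (haT : a ≠ T)
    (h : b = a + 1 ∨ (a = 5*n - 1 ∧ (b = 0 ∨ b = n))) :
    (if b ≤ T then T - b else 5*n + T - b) < (if a ≤ T then T - a else 5*n + T - a) := by
  split_ifs <;> omega

/-- Any step of `p` advances its program counter along the cycle. -/
lemma pc_succ {c : Config Net Val} {p : Net.Proc} {a : Act Net.Proc Val} {c' : Config Net Val}
    (h : Step Net Val c p a c') :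
    idx (c'.pc p) = idx (c.pc p) + 1 ∨
      (idx (c.pc p) = 5 * Net.deg p - 1 ∧ (idx (c'.pc p) = 0 ∨ idx (c'.pc p) = Net.deg p)) := by
  have h0 : ((0 : Fin 4) : ℕ) = 0 := rfl
  have h1 : ((1 : Fin 4) : ℕ) = 1 := rfl
  have h2 : ((2 : Fin 4) : ℕ) = 2 := rfl
  have h3 : ((3 : Fin 4) : ℕ) = 3 := rfl
  cases h with
  | writeW i v hpc =>
    have := i.isLt
    simp only [hpc, Function.update_self, finSucc?]
    split_ifs with hlt
    · left; simp [idx]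
    · left; simp [idx, h0]; try omega
  | readNbrW i hpc => left; simp [hpc, Function.update_self, idx, h0, h1]
  | writeR i hpc => left; simp [hpc, Function.update_self, idx, h1, h2]
  | readNbrR i hpc => left; simp [hpc, Function.update_self, idx, h2, h3]; try omega
  | readOwnW i hpc =>
    have hi := i.isLt
    by_cases hlt : i.1 + 1 < Net.deg p
    · left
      simp [hpc, Function.update_self, finSucc?, hlt, idx, h0, h3]
      omega
    · right
      simp only [hpc, Function.update_self, finSucc?, dif_neg hlt]
      refine ⟨by simp [idx, h3]; omega, ?_⟩
      split_ifs <;> simp [idx, h0] <;> omega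

end RC

namespace RC
open Classical

variable {Net : Network} {Val : Type}

lemma enabled_all (c : Config Net Val) (p : Net.Proc) (v0 : Val) : Enabled c p := by
  rcases h : c.pc p with i | ⟨i, k⟩
  · exact ⟨_, _, .writeW c p i v0 h⟩
  · rcases k with ⟨k, hk⟩
    interval_cases k
    · exact ⟨_, _, .readNbrW c p i h⟩
    · exact ⟨_, _, .writeR c p i h⟩
    · exact ⟨_, _, .readNbrR c p i h⟩
    · exact ⟨_, _, .readOwnW c p i h⟩

/-- A step of `p` does not change the local state of `q ≠ p`, nor registers owned by `q`. -/
lemma step_frame {c : Config Net Val} {p : Net.Proc} {a : Act Net.Proc Val} {c' : Config Net Val}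
    (h : Step Net Val c p a c') (q : Net.Proc) (hq : q ≠ p) :
    c'.pc q = c.pc q ∧ c'.rv q = c.rv q ∧ c'.vv q = c.vv q ∧ c'.sv q = c.sv q ∧
      (∀ y, c'.regW q y = c.regW q y) ∧ (∀ y, c'.regR q y = c.regR q y) := by
  cases h <;>
    refine ⟨?_, ?_, ?_, ?_, fun y => ?_, fun y => ?_⟩ <;>
      simp [upd2, Function.update_of_ne hq, hq]

lemma step_regW_of_loop {c : Config Net Val} {p : Net.Proc} {a : Act Net.Proc Val}
    {c' : Config Net Val} (h : Step Net Val c p a c')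
    (hl : ∀ i, c.pc p ≠ PC.write i) : c'.regW = c.regW := by
  cases h with
  | writeW i v hpc => exact absurd hpc (hl i)
  | readNbrW i hpc => rfl
  | writeR i hpc => rfl
  | readNbrR i hpc => rfl
  | readOwnW i hpc => rfl

lemma step_loop0 {c : Config Net Val} {p : Net.Proc} {a : Act Net.Proc Val} {c' : Config Net Val}
    (h : Step Net Val c p a c') {j : Fin (Net.deg p)} (hpc : c.pc p = .loop j 0) :
    c'.pc p = .loop j 1 ∧ c'.rv p = Function.update (c.rv p) j (c.regW (Net.nbr p j) p) ∧
      c'.vv p = c.vv p ∧ c'.sv p = c.sv p ∧ c'.regW = c.regW ∧ c'.regR = c.regR := by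
  cases h with
  | writeW i v h' => rw [hpc] at h'; cases h'
  | readNbrW i h' =>
    rw [hpc] at h'; injection h' with h1 h2; cases h1
    refine ⟨?_, ?_, ?_, ?_, ?_, ?_⟩ <;> simp
  | writeR i h' => rw [hpc] at h'; injection h' with h1 h2; exact absurd h2 (by decide)
  | readNbrR i h' => rw [hpc] at h'; injection h' with h1 h2; exact absurd h2 (by decide)
  | readOwnW i h' => rw [hpc] at h'; injection h' with h1 h2; exact absurd h2 (by decide)

lemma step_loop1 {c : Config Net Val} {p : Net.Proc} {a : Act Net.Proc Val} {c' : Config Net Val}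
    (h : Step Net Val c p a c') {j : Fin (Net.deg p)} (hpc : c.pc p = .loop j 1) :
    c'.pc p = .loop j 2 ∧ c'.rv p = c.rv p ∧ c'.vv p = c.vv p ∧ c'.sv p = c.sv p ∧
      c'.regW = c.regW ∧ c'.regR = upd2 c.regR p (Net.nbr p j) (c.rv p j) := by
  cases h with
  | writeW i v h' => rw [hpc] at h'; cases h'
  | readNbrW i h' => rw [hpc] at h'; injection h' with h1 h2; exact absurd h2 (by decide)
  | writeR i h' =>
    rw [hpc] at h'; injection h' with h1 h2; cases h1
    refine ⟨?_, ?_, ?_, ?_, ?_, ?_⟩ <;> simp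
  | readNbrR i h' => rw [hpc] at h'; injection h' with h1 h2; exact absurd h2 (by decide)
  | readOwnW i h' => rw [hpc] at h'; injection h' with h1 h2; exact absurd h2 (by decide)

lemma step_loop2 {c : Config Net Val} {p : Net.Proc} {a : Act Net.Proc Val} {c' : Config Net Val}
    (h : Step Net Val c p a c') {j : Fin (Net.deg p)} (hpc : c.pc p = .loop j 2) :
    c'.pc p = .loop j 3 ∧ c'.rv p = c.rv p ∧
      c'.vv p = Function.update (c.vv p) j (c.regR (Net.nbr p j) p) ∧ c'.sv p = c.sv p ∧
      c'.regW = c.regW ∧ c'.regR = c.regR := by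
  cases h with
  | writeW i v h' => rw [hpc] at h'; cases h'
  | readNbrW i h' => rw [hpc] at h'; injection h' with h1 h2; exact absurd h2 (by decide)
  | writeR i h' => rw [hpc] at h'; injection h' with h1 h2; exact absurd h2 (by decide)
  | readNbrR i h' =>
    rw [hpc] at h'; injection h' with h1 h2; cases h1
    refine ⟨?_, ?_, ?_, ?_, ?_, ?_⟩ <;> simp
  | readOwnW i h' => rw [hpc] at h'; injection h' with h1 h2; exact absurd h2 (by decide)

lemma step_loop3 {c : Config Net Val} {p : Net.Proc} {a : Act Net.Proc Val} {c' : Config Net Val}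
    (h : Step Net Val c p a c') {j : Fin (Net.deg p)} (hpc : c.pc p = .loop j 3) :
    c'.rv p = c.rv p ∧ c'.vv p = c.vv p ∧
      c'.sv p = Function.update (c.sv p) j (c.regW p (Net.nbr p j)) ∧
      c'.regW = c.regW ∧ c'.regR = c.regR ∧
      (∀ j', finSucc? j = some j' → c'.pc p = .loop j' 0) ∧
      (finSucc? j = none →
        (∀ l, c.vv p l = Function.update (c.sv p) j (c.regW p (Net.nbr p j)) l) →
        c'.pc p = .write ⟨0, Net.deg_pos p⟩) := by
  cases h with
  | writeW i v h' => rw [hpc] at h'; cases h'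
  | readNbrW i h' => rw [hpc] at h'; injection h' with h1 h2; exact absurd h2 (by decide)
  | writeR i h' => rw [hpc] at h'; injection h' with h1 h2; exact absurd h2 (by decide)
  | readNbrR i h' => rw [hpc] at h'; injection h' with h1 h2; exact absurd h2 (by decide)
  | readOwnW i h' =>
    rw [hpc] at h'; injection h' with h1 h2; cases h1
    refine ⟨rfl, rfl, by simp, rfl, rfl, ?_, ?_⟩
    · intro j' hj'
      simp [Function.update_self, hj']
    · intro hj' htest
      simp [Function.update_self, hj', if_pos htest]

end RC

namespace RC
open Classical

variable {Net : Network} {Val : Type}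

/-- With a fair scheduler, every process is scheduled at or after any instant,
and we may choose the first such instant. -/
lemma sched_first (e : Exec Net Val) (hfair : e.Fair) (v0 : Val) (p : Net.Proc) (a : ℕ) :
    ∃ b, a ≤ b ∧ e.sched b = p ∧ ∀ w, a ≤ w → w < b → e.sched w ≠ p := by
  have h : ∃ u, a ≤ u ∧ e.sched u = p :=
    hfair p a (fun u _ => enabled_all (e.cfg u) p v0)
  classical
  exact ⟨Nat.find h, (Nat.find_spec h).1, (Nat.find_spec h).2,
    fun w haw hwb hsw => Nat.find_min h hwb ⟨haw, hsw⟩⟩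

/-- If `p` is not scheduled during `[a, b)`, its local state does not change. -/
lemma local_const (e : Exec Net Val) (p : Net.Proc) (a : ℕ) :
    ∀ b, a ≤ b → (∀ w, a ≤ w → w < b → e.sched w ≠ p) →
      (e.cfg b).pc p = (e.cfg a).pc p ∧ (e.cfg b).rv p = (e.cfg a).rv p ∧
        (e.cfg b).vv p = (e.cfg a).vv p ∧ (e.cfg b).sv p = (e.cfg a).sv p := by
  intro b hb
  induction b, hb using Nat.le_induction with
  | base => exact fun _ => ⟨rfl, rfl, rfl, rfl⟩
  | succ b hab ih =>
    intro hns
    have hnb : p ≠ e.sched b := fun h => hns b hab (Nat.lt_succ_self b) h.symm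
    obtain ⟨h1, h2, h3, h4, -, -⟩ := step_frame (e.step b) p hnb
    obtain ⟨g1, g2, g3, g4⟩ := ih (fun w hw hwb => hns w hw (Nat.lt_succ_of_lt hwb))
    exact ⟨h1.trans g1, h2.trans g2, h3.trans g3, h4.trans g4⟩

/-- From any instant there is a later instant at which `p` is scheduled and has
the same local state. -/
lemma next_sched (e : Exec Net Val) (hfair : e.Fair) (v0 : Val) (p : Net.Proc) (a : ℕ) :
    ∃ b, a ≤ b ∧ e.sched b = p ∧ (e.cfg b).pc p = (e.cfg a).pc p ∧
      (e.cfg b).rv p = (e.cfg a).rv p ∧ (e.cfg b).vv p = (e.cfg a).vv p ∧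
      (e.cfg b).sv p = (e.cfg a).sv p := by
  obtain ⟨b, hab, hsb, hmin⟩ := sched_first e hfair v0 p a
  obtain ⟨h1, h2, h3, h4⟩ := local_const e p a b hab hmin
  exact ⟨b, hab, hsb, h1, h2, h3, h4⟩

/-- From any instant, `p` eventually is scheduled while at any given loop location. -/
lemma reach_loop (e : Exec Net Val) (hfair : e.Fair) (v0 : Val) (p : Net.Proc)
    (j : Fin (Net.deg p)) (k : Fin 4) (a : ℕ) :
    ∃ u, a ≤ u ∧ e.sched u = p ∧ (e.cfg u).pc p = PC.loop j k := by
  have hjn := j.isLt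
  have hk4 := k.isLt
  have hnT : Net.deg p ≤ idx (PC.loop j k) := by simp [idx]; omega
  have hT5 : idx (PC.loop j k) < 5 * Net.deg p := idx_lt _
  have key : ∀ m a, (if idx ((e.cfg a).pc p) ≤ idx (PC.loop j k) then idx (PC.loop j k) - idx ((e.cfg a).pc p)
      else 5 * Net.deg p + idx (PC.loop j k) - idx ((e.cfg a).pc p)) < m →
      ∃ u, a ≤ u ∧ e.sched u = p ∧ (e.cfg u).pc p = PC.loop j k := by
    intro m
    induction m with
    | zero => intro a h; omega
    | succ m ih =>
      intro a hm
      obtain ⟨b, hab, hsb, hmin⟩ := sched_first e hfair v0 p a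
      have hpc : (e.cfg b).pc p = (e.cfg a).pc p := (local_const e p a b hab hmin).1
      by_cases htar : (e.cfg b).pc p = PC.loop j k
      · exact ⟨b, hab, hsb, htar⟩
      · have hstep := e.step b
        rw [hsb] at hstep
        have hsucc := pc_succ hstep
        have hne : idx ((e.cfg b).pc p) ≠ idx (PC.loop j k) := fun h => htar (eq_of_idx_eq h)
        have hblt : idx ((e.cfg (b+1)).pc p) < 5 * Net.deg p := idx_lt _
        have hdec := rank_lt hnT hT5 hblt hne hsucc
        rw [hpc] at hdec
        obtain ⟨u, hu, hsu, hpcu⟩ := ih (b+1) (lt_of_lt_of_le hdec (Nat.lt_succ_iff.mp hm))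
        exact ⟨u, by omega, hsu, hpcu⟩
  exact key _ a (Nat.lt_succ_self _)

end RC

namespace RC
open Classical

variable {Net : Network} {Val : Type}

lemma step_write {c : Config Net Val} {p : Net.Proc} {a : Act Net.Proc Val} {c' : Config Net Val}
    (h : Step Net Val c p a c') {i : Fin (Net.deg p)} (hpc : c.pc p = .write i) :
    c'.rv p = c.rv p ∧ c'.vv p = c.vv p ∧ c'.sv p = c.sv p ∧ c'.regR = c.regR := by
  cases h with
  | writeW i' v h' => exact ⟨rfl, rfl, rfl, rfl⟩
  | readNbrW i' h' => rw [hpc] at h'; cases h'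
  | writeR i' h' => rw [hpc] at h'; cases h'
  | readNbrR i' h' => rw [hpc] at h'; cases h'
  | readOwnW i' h' => rw [hpc] at h'; cases h'

lemma finSucc?_some {n : ℕ} {i i' : Fin n} (h : finSucc? i = some i') : i'.1 = i.1 + 1 := by
  simp only [finSucc?] at h
  split at h
  · injection h with h2; rw [← h2]
  · cases h

lemma finSucc?_none {n : ℕ} {i : Fin n} (h : finSucc? i = none) : ¬ (i.1 + 1 < n) := by
  simp only [finSucc?] at h
  split at h
  · cases h
  · assumption

lemma step_rv_inv {c c' : Config Net Val} {B : Net.Proc} {a : Act Net.Proc Val}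
    (h : Step Net Val c B a c') {j : Fin (Net.deg B)} {A : Net.Proc}
    (hj : Net.nbr B j = A) {w : Val}
    (hWv : c.regW A B = w) (hrv : c.rv B j = w) : c'.rv B j = w := by
  rcases hpc : c.pc B with i' | ⟨i', k⟩
  · rw [congrFun (step_write h hpc).1 j]; exact hrv
  · rcases k with ⟨k, hk⟩
    interval_cases k
    · obtain ⟨-, hrv', -, -, -, -⟩ := step_loop0 h hpc
      rw [congrFun hrv' j]
      by_cases hij : i' = j
      · subst hij; rw [Function.update_self, hj]; exact hWv
      · rw [Function.update_of_ne (fun hh => hij hh.symm)]; exact hrv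
    · exact (congrFun (step_loop1 h hpc).2.1 j).trans hrv
    · exact (congrFun (step_loop2 h hpc).2.1 j).trans hrv
    · exact (congrFun (step_loop3 h hpc).1 j).trans hrv

lemma step_regR_inv {c c' : Config Net Val} {B : Net.Proc} {a : Act Net.Proc Val}
    (h : Step Net Val c B a c') (hinj : Function.Injective (Net.nbr B))
    {j : Fin (Net.deg B)} {A : Net.Proc} (hj : Net.nbr B j = A) {w : Val}
    (hrv : c.rv B j = w) (hrr : c.regR B A = w) : c'.regR B A = w := by
  rcases hpc : c.pc B with i' | ⟨i', k⟩
  · rw [congrFun (congrFun (step_write h hpc).2.2.2 B) A]; exact hrr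
  · rcases k with ⟨k, hk⟩
    interval_cases k
    · rw [congrFun (congrFun (step_loop0 h hpc).2.2.2.2.2 B) A]; exact hrr
    · obtain ⟨-, -, -, -, -, hR⟩ := step_loop1 h hpc
      rw [congrFun (congrFun hR B) A]
      simp only [upd2]
      split_ifs with hcond
      · have hij : i' = j := hinj (show Net.nbr B i' = Net.nbr B j by rw [← hcond.2, hj])
        rw [hij]; exact hrv
      · exact hrr
    · rw [congrFun (congrFun (step_loop2 h hpc).2.2.2.2.2 B) A]; exact hrr
    · rw [congrFun (congrFun (step_loop3 h hpc).2.2.2.2.1 B) A]; exact hrr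

end RC


open RC in
/-- Let `A` be a process executing the Read Checking protocol.
Whatever the (fair) execution, from any instant the system reaches a configuration
in which the program counter of `A` is no longer within the repeat loop; in
particular no process stays in the repeat loop forever (the protocol is
deadlock-free). -/
theorem read_checking_exits_loop (Net : Network) (Val : Type)
    (e : Exec Net Val) (hfair : e.Fair) (A : Net.Proc) (t : ℕ) :
    ∃ u, t ≤ u ∧ ¬ InLoop (e.cfg u) A := by
    classical
  by_contra hcon
  push_neg at hcon
  -- hcon : ∀ u, t ≤ u → InLoop (e.cfg u) A
  set v0 : Val := (e.cfg t).regW A A with hv0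
  -- A's own write registers never change any more
  have hW : ∀ u, t ≤ u → (e.cfg u).regW A = (e.cfg t).regW A := by
    intro u hu
    induction u, hu using Nat.le_induction with
    | base => rfl
    | succ u hu ih =>
      by_cases hs : e.sched u = A
      · obtain ⟨i, k, hpc⟩ := hcon u hu
        have hstep := e.step u
        rw [hs] at hstep
        have hWW : (e.cfg (u+1)).regW = (e.cfg u).regW :=
          step_regW_of_loop hstep (fun i' h => by rw [hpc] at h; cases h)
        exact (congrFun hWW A).trans ih
      · exact (funext ((step_frame (e.step u) A (fun h => hs h.symm)).2.2.2.2.1)).trans ih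
  -- each neighbour eventually copies `Write_{A B}` into `Read_{B A}`, permanently
  have hreg : ∀ i : Fin (Net.deg A), ∃ U, t ≤ U ∧ ∀ u, U ≤ u →
      (e.cfg u).regR (Net.nbr A i) A = (e.cfg t).regW A (Net.nbr A i) := by
    intro i
    obtain ⟨j, hj⟩ := Net.nbr_symm A i
    obtain ⟨u1, hu1, hs1, hpc1⟩ := reach_loop e hfair v0 (Net.nbr A i) j 0 t
    have hst1 := e.step u1
    rw [hs1] at hst1
    obtain ⟨-, hrv1, -, -, -, -⟩ := step_loop0 hst1 hpc1
    have hrvval : (e.cfg (u1+1)).rv (Net.nbr A i) j = (e.cfg t).regW A (Net.nbr A i) := by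
      rw [congrFun hrv1 j, Function.update_self, hj, congrFun (hW u1 hu1) (Net.nbr A i)]
    have hrvinv : ∀ u, u1+1 ≤ u →
        (e.cfg u).rv (Net.nbr A i) j = (e.cfg t).regW A (Net.nbr A i) := by
      intro u hu
      induction u, hu using Nat.le_induction with
      | base => exact hrvval
      | succ u hu ih =>
        by_cases hs : e.sched u = Net.nbr A i
        · have hst := e.step u
          rw [hs] at hst
          exact step_rv_inv hst hj (congrFun (hW u (by omega)) (Net.nbr A i)) ih
        · exact (congrFun ((step_frame (e.step u) _ (fun h => hs h.symm)).2.1) j).trans ih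
    obtain ⟨u2, hu2, hs2, hpc2⟩ := reach_loop e hfair v0 (Net.nbr A i) j 1 (u1+1)
    have hst2 := e.step u2
    rw [hs2] at hst2
    obtain ⟨-, -, -, -, -, hRR2⟩ := step_loop1 hst2 hpc2
    have hrr0 : (e.cfg (u2+1)).regR (Net.nbr A i) A = (e.cfg t).regW A (Net.nbr A i) := by
      rw [congrFun (congrFun hRR2 (Net.nbr A i)) A]
      simp only [upd2]
      rw [if_pos ⟨trivial, hj.symm⟩]
      exact hrvinv u2 hu2
    refine ⟨u2+1, by omega, ?_⟩
    intro u hu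
    induction u, hu using Nat.le_induction with
    | base => exact hrr0
    | succ u hu ih =>
      by_cases hs : e.sched u = Net.nbr A i
      · have hst := e.step u
        rw [hs] at hst
        exact step_regR_inv hst (Net.nbr_inj (Net.nbr A i)) hj (hrvinv u (by omega)) ih
      · exact (((step_frame (e.step u) _
          (fun h => hs h.symm)).2.2.2.2.2) A).trans ih
  choose U hUt hU using hreg
  set M : ℕ := Finset.univ.sup U with hM
  have hMt : t ≤ M := le_trans (hUt ⟨0, Net.deg_pos A⟩)
    (Finset.le_sup (Finset.mem_univ (⟨0, Net.deg_pos A⟩ : Fin (Net.deg A))))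
  have hRR : ∀ u, M ≤ u → ∀ i : Fin (Net.deg A),
      (e.cfg u).regR (Net.nbr A i) A = (e.cfg t).regW A (Net.nbr A i) :=
    fun u hu i => hU i u (le_trans (Finset.le_sup (Finset.mem_univ i)) hu)
  -- a complete pass of A through the repeat loop exits it: contradiction
  have pass : ∀ m : ℕ, ∀ i : Fin (Net.deg A), ∀ w : ℕ,
      M ≤ w → Net.deg A - i.1 ≤ m → e.sched w = A → (e.cfg w).pc A = PC.loop i 0 →
      (∀ l : Fin (Net.deg A), l.1 < i.1 →
        (e.cfg w).vv A l = (e.cfg t).regW A (Net.nbr A l)) →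
      (∀ l : Fin (Net.deg A), l.1 < i.1 →
        (e.cfg w).sv A l = (e.cfg t).regW A (Net.nbr A l)) →
      False := by
    intro m
    induction m with
    | zero => intro i w _ hm _ _ _ _; have := i.isLt; omega
    | succ m ih =>
      intro i w hw hm hsw hpcw hvv hsv
      have hst0 := e.step w
      rw [hsw] at hst0
      obtain ⟨P0, -, V0, S0, -, -⟩ := step_loop0 hst0 hpcw
      obtain ⟨w1, hw1, hs1, Q1, R1, Vq1, Sq1⟩ := next_sched e hfair v0 A (w+1)
      have hpc1 : (e.cfg w1).pc A = PC.loop i 1 := Q1.trans P0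
      have hst1 := e.step w1
      rw [hs1] at hst1
      obtain ⟨P1, R1', V1, S1, -, -⟩ := step_loop1 hst1 hpc1
      obtain ⟨w2, hw2, hs2, Q2, R2, Vq2, Sq2⟩ := next_sched e hfair v0 A (w1+1)
      have hpc2 : (e.cfg w2).pc A = PC.loop i 2 := Q2.trans P1
      have hst2 := e.step w2
      rw [hs2] at hst2
      obtain ⟨P2, R2', V2, S2, -, -⟩ := step_loop2 hst2 hpc2
      obtain ⟨w3, hw3, hs3, Q3, R3, Vq3, Sq3⟩ := next_sched e hfair v0 A (w2+1)
      have hpc3 : (e.cfg w3).pc A = PC.loop i 3 := Q3.trans P2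
      have hst3 := e.step w3
      rw [hs3] at hst3
      obtain ⟨R3', V3, S3', GW, GR, Psome, Pnone⟩ := step_loop3 hst3 hpc3
      have hMw2 : M ≤ w2 := by omega
      have htw3 : t ≤ w3 := by omega
      have hvv3 : ∀ l : Fin (Net.deg A), l.1 ≤ i.1 →
          (e.cfg w3).vv A l = (e.cfg t).regW A (Net.nbr A l) := by
        intro l hl
        rw [congrFun Vq3 l, congrFun V2 l]
        by_cases hli : l = i
        · subst hli
          rw [Function.update_self]
          exact hRR w2 hMw2 l
        · have hlv : l.1 < i.1 := by
            have := fun h => hli (Fin.ext h); omega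
          rw [Function.update_of_ne hli, congrFun Vq2 l, congrFun V1 l,
            congrFun Vq1 l, congrFun V0 l]
          exact hvv l hlv
      have hsv3 : ∀ l : Fin (Net.deg A), l.1 < i.1 →
          (e.cfg w3).sv A l = (e.cfg t).regW A (Net.nbr A l) := by
        intro l hl
        rw [congrFun Sq3 l, congrFun S2 l, congrFun Sq2 l, congrFun S1 l,
          congrFun Sq1 l, congrFun S0 l]
        exact hsv l hl
      rcases hsucc : finSucc? i with - | i'
      · -- last neighbour: the exit test succeeds and A leaves the loop
        have hlast := finSucc?_none hsucc
        have hiv := i.isLt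
        have htest : ∀ l, (e.cfg w3).vv A l =
            Function.update ((e.cfg w3).sv A) i ((e.cfg w3).regW A (Net.nbr A i)) l := by
          intro l
          by_cases hli : l = i
          · subst hli
            rw [Function.update_self, congrFun (hW w3 htw3) (Net.nbr A l)]
            exact hvv3 l le_rfl
          · have hlv : l.1 < i.1 := by
              have := fun h => hli (Fin.ext h); have := l.isLt; omega
            rw [Function.update_of_ne hli, hsv3 l hlv]
            exact hvv3 l (le_of_lt hlv)
        have hpcw3 : (e.cfg (w3+1)).pc A = PC.write ⟨0, Net.deg_pos A⟩ := Pnone hsucc htest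
        obtain ⟨i'', k'', hpl⟩ := hcon (w3+1) (by omega)
        rw [hpcw3] at hpl
        cases hpl
      · -- go on to the next neighbour
        have hpc4 : (e.cfg (w3+1)).pc A = PC.loop i' 0 := Psome i' hsucc
        have hii' : i'.1 = i.1 + 1 := finSucc?_some hsucc
        have hvv4 : ∀ l : Fin (Net.deg A), l.1 < i'.1 →
            (e.cfg (w3+1)).vv A l = (e.cfg t).regW A (Net.nbr A l) := by
          intro l hl
          rw [congrFun V3 l]
          exact hvv3 l (by omega)
        have hsv4 : ∀ l : Fin (Net.deg A), l.1 < i'.1 →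
            (e.cfg (w3+1)).sv A l = (e.cfg t).regW A (Net.nbr A l) := by
          intro l hl
          rw [congrFun S3' l]
          by_cases hli : l = i
          · subst hli
            rw [Function.update_self]
            exact congrFun (hW w3 htw3) (Net.nbr A l)
          · have hlv : l.1 < i.1 := by
              have := fun h => hli (Fin.ext h); omega
            rw [Function.update_of_ne hli]
            exact hsv3 l hlv
        obtain ⟨w4, hw4, hs4, Q4, R4, Vq4, Sq4⟩ := next_sched e hfair v0 A (w3+1)
        have hiv := i.isLt
        exact ih i' w4 (by omega) (by omega) hs4 (Q4.trans hpc4)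
          (fun l hl => (congrFun Vq4 l).trans (hvv4 l hl))
          (fun l hl => (congrFun Sq4 l).trans (hsv4 l hl))
  obtain ⟨w, hwM, hsw, hpcw⟩ := reach_loop e hfair v0 A ⟨0, Net.deg_pos A⟩ 0 M
  exact pass (Net.deg A) ⟨0, Net.deg_pos A⟩ w hwM (Nat.sub_le _ _) hsw hpcw
    (fun l hl => absurd hl (Nat.not_lt_zero _)) (fun l hl => absurd hl (Nat.not_lt_zero _))
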